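/- arXiv:1212.1291 — 3 statements merged into one kernel-verified Lean document; each statement's English description precedes it below -/
import Mathlib

section
/- For all natural numbers n ≥ 1, the inclusion map of the ordered configuration space F(ℂP^∞, n) into the n-fold product (ℂP^∞)^n is a homotopy equivalence; that is, there exists a homotopy equivalence between F(ℂP^∞, n) and (ℂP^∞)^n whose forward map is the inclusion. -/
set_option maxHeartbeats 1000000



/-- The vector space `V = ℂ^(ℕ)` of finitely supported sequences of complex numbers,
endowed with the final (colimit) topology with respect to the inclusions of the
finite-dimensional subspaces `{v : v i = 0 for all i ≥ k}`, each of which carries the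
topology induced from the product topology on `ℕ → ℂ`. -/
noncomputable instance : TopologicalSpace (ℕ →₀ ℂ) :=
  ⨆ k : ℕ,
    TopologicalSpace.coinduced
      (Subtype.val : {v : ℕ →₀ ℂ // ∀ i, k ≤ i → v i = 0} → (ℕ →₀ ℂ))
      (TopologicalSpace.induced
        (fun v : {v : ℕ →₀ ℂ // ∀ i, k ≤ i → v i = 0} => fun i => (v : ℕ →₀ ℂ) i)
        Pi.topologicalSpace)

/-- `ℂP^∞`, the projectivization of `V = ℂ^(ℕ)` (nonzero vectors modulo nonzero
scalar multiplication), with the quotient topology. -/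
abbrev CPinf : Type := Projectivization ℂ (ℕ →₀ ℂ)

/-- The quotient topology on `ℂP^∞`. -/
noncomputable instance : TopologicalSpace CPinf :=
  inferInstanceAs (TopologicalSpace (Quotient (projectivizationSetoid ℂ (ℕ →₀ ℂ))))

namespace CfgCP

open TopologicalSpace Topology
open scoped LinearAlgebra.Projectivization

/-- The `k`-th finite-dimensional piece of `ℕ →₀ ℂ`. -/
structure Piece (k : ℕ) : Type where
  val : ℕ →₀ ℂ
  zero : ∀ i, k ≤ i → val i = 0

noncomputable instance (k : ℕ) : TopologicalSpace (Piece k) :=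
  TopologicalSpace.induced (fun p : Piece k => fun i => p.val i) Pi.topologicalSpace

/-- The pieces as subtypes (as used in the definition of the topology on `ℕ →₀ ℂ`). -/
def pieceEquiv (k : ℕ) : Piece k ≃ {v : ℕ →₀ ℂ // ∀ i, k ≤ i → v i = 0} where
  toFun p := ⟨p.val, p.zero⟩
  invFun s := ⟨s.1, s.2⟩
  left_inv _ := rfl
  right_inv _ := rfl

lemma pieceTop_eq (k : ℕ) :
    TopologicalSpace.coinduced (fun p : Piece k => p.val) (instTopologicalSpacePiece k) =
      TopologicalSpace.coinduced
        (Subtype.val : {v : ℕ →₀ ℂ // ∀ i, k ≤ i → v i = 0} → (ℕ →₀ ℂ))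
        (TopologicalSpace.induced
          (fun v : {v : ℕ →₀ ℂ // ∀ i, k ≤ i → v i = 0} => fun i => (v : ℕ →₀ ℂ) i)
          Pi.topologicalSpace) := by
  refine TopologicalSpace.ext_iff.mpr fun U => ?_
  simp only [isOpen_coinduced]
  rw [show (instTopologicalSpacePiece k : TopologicalSpace (Piece k)) =
      TopologicalSpace.induced (fun p : Piece k => fun i => p.val i) Pi.topologicalSpace
      from rfl]
  simp only [isOpen_induced_iff]
  constructor
  · rintro ⟨W, hW, hEq⟩
    exact ⟨W, hW, Set.ext fun s => Set.ext_iff.1 hEq ⟨s.1, s.2⟩⟩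
  · rintro ⟨W, hW, hEq⟩
    exact ⟨W, hW, Set.ext fun p => Set.ext_iff.1 hEq ⟨p.val, p.zero⟩⟩

def sig : (Σ k, Piece k) → (ℕ →₀ ℂ) := fun p => p.2.val

lemma isQuotientMap_sig : IsQuotientMap sig := by
  constructor
  swap
  · intro v
    refine ⟨⟨v.support.sup id + 1, ⟨v, fun i hi => ?_⟩⟩, rfl⟩
    by_contra h
    have hm : i ∈ v.support := Finsupp.mem_support_iff.2 h
    have := Finset.le_sup (f := id) hm
    simp only [id] at this
    omega
  · refine ⟨?_⟩
    rw [show (instTopologicalSpaceSigma : TopologicalSpace (Σ k, Piece k))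
        = ⨆ k, TopologicalSpace.coinduced (Sigma.mk k) (instTopologicalSpacePiece k) from rfl,
      coinduced_iSup]
    simp only [coinduced_compose]
    exact (iSup_congr fun k => pieceTop_eq k).symm

lemma continuous_pieceVal (k : ℕ) : Continuous (fun p : Piece k => p.val) := by
  rw [continuous_iff_coinduced_le, pieceTop_eq k]
  exact le_iSup (fun k : ℕ =>
    TopologicalSpace.coinduced
      (Subtype.val : {v : ℕ →₀ ℂ // ∀ i, k ≤ i → v i = 0} → (ℕ →₀ ℂ))
      (TopologicalSpace.induced
        (fun v : {v : ℕ →₀ ℂ // ∀ i, k ≤ i → v i = 0} => fun i => (v : ℕ →₀ ℂ) i)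
        Pi.topologicalSpace)) k

lemma continuous_coord (k j : ℕ) : Continuous (fun p : Piece k => (p.val : ℕ →₀ ℂ) j) :=
  (continuous_apply j).comp continuous_induced_dom

/-- A self-map of `ℕ →₀ ℂ` which respects the filtration by pieces and is continuous
in each coordinate on each piece. -/
structure GoodMap (B : (ℕ →₀ ℂ) → (ℕ →₀ ℂ)) : Prop where
  bound : ∀ k, ∃ m, ∀ v : ℕ →₀ ℂ, (∀ i, k ≤ i → v i = 0) → ∀ i, m ≤ i → B v i = 0
  coord : ∀ k j, Continuous fun p : Piece k => (B p.val) j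

lemma GoodMap.continuous {B : (ℕ →₀ ℂ) → (ℕ →₀ ℂ)} (hB : GoodMap B) : Continuous B := by
  rw [isQuotientMap_sig.continuous_iff]
  apply continuous_sigma
  intro k
  obtain ⟨m, hm⟩ := hB.bound k
  exact (continuous_pieceVal m).comp
    (continuous_induced_rng.2 (continuous_pi fun j => hB.coord k j) :
      Continuous fun p : Piece k => (⟨B p.val, fun i hi => hm p.val p.zero i hi⟩ : Piece m))

/-- The straight-line combination of two maps. -/
noncomputable def lineMap (B C : (ℕ →₀ ℂ) → (ℕ →₀ ℂ)) : ℝ × (ℕ →₀ ℂ) → (ℕ →₀ ℂ) :=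
  fun p => (1 - (p.1 : ℂ)) • B p.2 + (p.1 : ℂ) • C p.2

lemma continuous_of_pieces {X : Type*} [TopologicalSpace X] (F : ℝ × (ℕ →₀ ℂ) → X)
    (h : ∀ k, Continuous fun q : Piece k × ℝ => F (q.2, q.1.val)) : Continuous F := by
  refine isQuotientMap_sig.continuous_lift_prod_right (g := F) ?_
  have hsig2 : Continuous fun q : (Σ k, Piece k × ℝ) => F (q.2.2, q.2.1.val) :=
    continuous_sigma fun k => h k
  have h2 : Continuous fun q : (Σ k, Piece k) × ℝ => F (q.2, sig q.1) :=
    (hsig2.comp (Homeomorph.sigmaProdDistrib (X := Piece) (Y := ℝ)).continuous).congr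
      fun q => rfl
  exact h2.comp continuous_swap

lemma continuous_lineMap {B C : (ℕ →₀ ℂ) → (ℕ →₀ ℂ)} (hB : GoodMap B) (hC : GoodMap C) :
    Continuous (lineMap B C) := by
  refine continuous_of_pieces _ fun k => ?_
  obtain ⟨m, hm⟩ := hB.bound k
  obtain ⟨m', hm'⟩ := hC.bound k
  have hmem : ∀ q : Piece k × ℝ, ∀ i, max m m' ≤ i → lineMap B C (q.2, q.1.val) i = 0 := by
    intro q i hi
    simp only [lineMap, Finsupp.add_apply, Finsupp.smul_apply, smul_eq_mul]
    rw [hm q.1.val q.1.zero i (le_trans (le_max_left _ _) hi),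
      hm' q.1.val q.1.zero i (le_trans (le_max_right _ _) hi)]
    ring
  refine (continuous_pieceVal (max m m')).comp
    (continuous_induced_rng.2 (continuous_pi fun j => ?_) :
      Continuous fun q : Piece k × ℝ =>
        (⟨lineMap B C (q.2, q.1.val), hmem q⟩ : Piece (max m m')))
  simp only [lineMap, Finsupp.add_apply, Finsupp.smul_apply, smul_eq_mul]
  exact ((continuous_const.sub (Complex.continuous_ofReal.comp continuous_snd)).mul
      ((hB.coord k j).comp continuous_fst)).add
    ((Complex.continuous_ofReal.comp continuous_snd).mul ((hC.coord k j).comp continuous_fst))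

lemma goodMap_id : GoodMap (id : (ℕ →₀ ℂ) → (ℕ →₀ ℂ)) :=
  ⟨fun k => ⟨k, fun v hv i hi => hv i hi⟩, fun k j => continuous_coord k j⟩

lemma goodMap_mapDomain {e : ℕ → ℕ} (he : StrictMono e) :
    GoodMap (Finsupp.mapDomain e) := by
  constructor
  · intro k
    refine ⟨e k, fun v hv i hi => ?_⟩
    by_cases h : i ∈ Set.range e
    · obtain ⟨a, rfl⟩ := h
      rw [Finsupp.mapDomain_apply he.injective]
      exact hv a (he.le_iff_le.mp hi)
    · exact Finsupp.mapDomain_notin_range v i h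
  · intro k j
    by_cases h : j ∈ Set.range e
    · obtain ⟨a, rfl⟩ := h
      simp only [Finsupp.mapDomain_apply he.injective]
      exact continuous_coord k a
    · simp only [Finsupp.mapDomain_notin_range _ _ h]
      exact continuous_const

lemma goodMap_smul (c : ℂ) : GoodMap (fun v : ℕ →₀ ℂ => c • v) := by
  constructor
  · intro k
    exact ⟨k, fun v hv i hi => by rw [Finsupp.smul_apply, hv i hi, smul_zero]⟩
  · intro k j
    simp only [Finsupp.smul_apply, smul_eq_mul]
    exact continuous_const.mul (continuous_coord k j)


/-- The canonical projection from nonzero vectors to `ℂP^∞`. -/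
noncomputable def pr : {v : ℕ →₀ ℂ // v ≠ 0} → CPinf := fun v => Projectivization.mk ℂ v.1 v.2

lemma continuous_pr : Continuous pr := continuous_quotient_mk'

lemma surjective_pr : Function.Surjective pr := fun q => by
  obtain ⟨v, rfl⟩ := Quotient.exists_rep q
  exact ⟨v, rfl⟩

/-- Scalar multiplication by a unit on nonzero vectors. -/
noncomputable def mulS (c : ℂˣ) : {v : ℕ →₀ ℂ // v ≠ 0} → {v : ℕ →₀ ℂ // v ≠ 0} :=
  fun v => ⟨(c : ℂ) • v.1, smul_ne_zero (Units.ne_zero c) v.2⟩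

lemma continuous_mulS (c : ℂˣ) : Continuous (mulS c) :=
  (((goodMap_smul (c : ℂ)).continuous).comp continuous_subtype_val).subtype_mk _

lemma isOpenMap_pr : IsOpenMap pr := by
  letI : Setoid {v : ℕ →₀ ℂ // v ≠ 0} := projectivizationSetoid ℂ (ℕ →₀ ℂ)
  intro U hU
  have hq : IsQuotientMap (Quotient.mk' :
      {v : ℕ →₀ ℂ // v ≠ 0} → Quotient (projectivizationSetoid ℂ (ℕ →₀ ℂ))) :=
    isQuotientMap_quotient_mk'
  change @IsOpen (Quotient (projectivizationSetoid ℂ (ℕ →₀ ℂ))) instTopologicalSpaceQuotient (pr '' U)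
  rw [← hq.isOpen_preimage]
  have : (Quotient.mk' : {v : ℕ →₀ ℂ // v ≠ 0} → _) ⁻¹' (pr '' U) =
      ⋃ c : ℂˣ, (mulS c) ⁻¹' U := by
    ext x
    simp only [Set.mem_preimage, Set.mem_image, Set.mem_iUnion]
    constructor
    · rintro ⟨u, hu, hequ⟩
      have hux : u ≈ x := Quotient.eq'.mp (hequ : Quotient.mk' u = Quotient.mk' x)
      obtain ⟨c, hc⟩ := hux
      exact ⟨c, by rwa [show mulS c x = u from Subtype.ext hc]⟩
    · rintro ⟨c, hc⟩
      refine ⟨mulS c x, hc, ?_⟩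
      have : (mulS c x) ≈ x := ⟨c, rfl⟩
      exact Quotient.sound' this
  rw [this]
  exact isOpen_iUnion fun c => (continuous_mulS c).isOpen_preimage U hU



/-! ### The embedding maps -/

def eA : ℕ → ℕ := fun k => 2 * k + 1

lemma eA_strictMono : StrictMono eA := fun a b h => by simp only [eA]; omega

def eS (n : ℕ) (i : Fin n) : ℕ → ℕ := fun k => 2 * (n * k + (i : ℕ))

lemma eS_strictMono (n : ℕ) (i : Fin n) : StrictMono (eS n i) := fun a b h => by
  have h1 : n * a < n * b := mul_lt_mul_of_pos_left h i.pos
  simp only [eS]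
  omega

noncomputable def lA : (ℕ →₀ ℂ) →ₗ[ℂ] (ℕ →₀ ℂ) := Finsupp.lmapDomain ℂ ℂ eA

noncomputable def lS (n : ℕ) (i : Fin n) : (ℕ →₀ ℂ) →ₗ[ℂ] (ℕ →₀ ℂ) :=
  Finsupp.lmapDomain ℂ ℂ (eS n i)

lemma lA_def (v : ℕ →₀ ℂ) : lA v = Finsupp.mapDomain eA v := rfl

lemma lS_def {n : ℕ} (i : Fin n) (v : ℕ →₀ ℂ) : lS n i v = Finsupp.mapDomain (eS n i) v := rfl

lemma lA_at (v : ℕ →₀ ℂ) (a : ℕ) : lA v (eA a) = v a := by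
  rw [lA_def, Finsupp.mapDomain_apply eA_strictMono.injective]

lemma lS_at {n : ℕ} (i : Fin n) (v : ℕ →₀ ℂ) (a : ℕ) : lS n i v (eS n i a) = v a := by
  rw [lS_def, Finsupp.mapDomain_apply (eS_strictMono n i).injective]

lemma lA_at_eS {n : ℕ} (i : Fin n) (v : ℕ →₀ ℂ) (k : ℕ) : lA v (eS n i k) = 0 := by
  rw [lA_def]
  refine Finsupp.mapDomain_notin_range v _ ?_
  rintro ⟨a, ha⟩
  simp only [eA, eS] at ha
  omega

lemma lS_at_eA {n : ℕ} (i : Fin n) (v : ℕ →₀ ℂ) (m : ℕ) : lS n i v (eA m) = 0 := by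
  rw [lS_def]
  refine Finsupp.mapDomain_notin_range v _ ?_
  rintro ⟨a, ha⟩
  simp only [eA, eS] at ha
  omega

lemma mod_aux {n a b i j : ℕ} (hi : i < n) (hj : j < n) (h : n * a + i = n * b + j) :
    i = j := by
  have h1 := Nat.mul_add_mod n a i
  have h2 := Nat.mul_add_mod n b j
  rw [Nat.mod_eq_of_lt hi] at h1
  rw [Nat.mod_eq_of_lt hj] at h2
  rw [h] at h1
  omega

lemma lS_at_eS {n : ℕ} {i j : Fin n} (hij : i ≠ j) (v : ℕ →₀ ℂ) (k : ℕ) :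
    lS n j v (eS n i k) = 0 := by
  rw [lS_def]
  refine Finsupp.mapDomain_notin_range v _ ?_
  rintro ⟨a, ha⟩
  simp only [eS] at ha
  have : n * a + (j : ℕ) = n * k + (i : ℕ) := by omega
  exact hij (Fin.ext (mod_aux j.isLt i.isLt this)).symm

/-! ### Straight-line families of linear maps -/

noncomputable def lineLM (f g : (ℕ →₀ ℂ) →ₗ[ℂ] (ℕ →₀ ℂ)) (t : ℝ) :
    (ℕ →₀ ℂ) →ₗ[ℂ] (ℕ →₀ ℂ) :=
  (1 - (t : ℂ)) • f + (t : ℂ) • g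

lemma lineLM_apply (f g : (ℕ →₀ ℂ) →ₗ[ℂ] (ℕ →₀ ℂ)) (t : ℝ) (v : ℕ →₀ ℂ) (j : ℕ) :
    lineLM f g t v j = (1 - (t : ℂ)) * (f v j) + (t : ℂ) * (g v j) := by
  simp [lineLM, Finsupp.add_apply, Finsupp.smul_apply, smul_eq_mul]

lemma lineLM_fun_apply (f g : (ℕ →₀ ℂ) →ₗ[ℂ] (ℕ →₀ ℂ)) (t : ℝ) (v : ℕ →₀ ℂ) :
    lineLM f g t v = lineMap (⇑f) (⇑g) (t, v) := by
  simp [lineLM, lineMap]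

lemma lineLM_zero (f g : (ℕ →₀ ℂ) →ₗ[ℂ] (ℕ →₀ ℂ)) : lineLM f g 0 = f := by
  simp [lineLM]

lemma lineLM_one (f g : (ℕ →₀ ℂ) →ₗ[ℂ] (ℕ →₀ ℂ)) : lineLM f g 1 = g := by
  simp [lineLM]

lemma inj_of_ker {F : (ℕ →₀ ℂ) →ₗ[ℂ] (ℕ →₀ ℂ)} (h : ∀ v, F v = 0 → v = 0) :
    Function.Injective F := fun v w hvw =>
  sub_eq_zero.mp (h _ (by rw [map_sub, hvw, sub_self]))

lemma ne_zero_of_inj {F : (ℕ →₀ ℂ) →ₗ[ℂ] (ℕ →₀ ℂ)} (hF : Function.Injective F)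
    {v : ℕ →₀ ℂ} (hv : v ≠ 0) : F v ≠ 0 := fun h => hv (hF (by rw [h, map_zero]))

lemma maxsupp (v : ℕ →₀ ℂ) (hv : v ≠ 0) :
    ∃ m, v m ≠ 0 ∧ ∀ x, m < x → v x = 0 := by
  have hs : v.support.Nonempty := Finsupp.support_nonempty_iff.2 hv
  refine ⟨v.support.max' hs, Finsupp.mem_support_iff.1 (v.support.max'_mem hs), ?_⟩
  intro x hx
  by_contra h
  exact absurd (Finset.le_max' _ x (Finsupp.mem_support_iff.2 h)) (by omega)

/-! ### Kernel and distinctness lemmas -/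

lemma kerL (t : ℝ) : ∀ v : ℕ →₀ ℂ, lineLM LinearMap.id lA t v = 0 → v = 0 := by
  intro v h
  by_contra hv
  obtain ⟨m, hm, hmax⟩ := maxsupp v hv
  have h1 : lineLM LinearMap.id lA t v (eA m) = 0 := by rw [h]; rfl
  rw [lineLM_apply] at h1
  have hAm : lA v (eA m) = v m := lA_at v m
  have hvm : (LinearMap.id : (ℕ →₀ ℂ) →ₗ[ℂ] (ℕ →₀ ℂ)) v (eA m) = 0 := by
    have : v (eA m) = 0 := hmax _ (by simp [eA]; omega)
    simpa using this
  rw [hAm, hvm, mul_zero, zero_add] at h1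
  by_cases ht : (t : ℂ) = 0
  · have h2 : lineLM LinearMap.id lA t v m = 0 := by rw [h]; rfl
    rw [lineLM_apply, ht] at h2
    simp only [zero_mul, add_zero, sub_zero, one_mul] at h2
    exact hm (by simpa using h2)
  · exact hm ((mul_eq_zero.mp h1).resolve_left ht)

lemma kerM {n : ℕ} (i : Fin n) (t : ℝ) :
    ∀ v : ℕ →₀ ℂ, lineLM lA (lS n i) t v = 0 → v = 0 := by
  intro v h
  by_contra hv
  obtain ⟨m, hm, _⟩ := maxsupp v hv
  have h1 : lineLM lA (lS n i) t v (eA m) = 0 := by rw [h]; rfl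
  have h2 : lineLM lA (lS n i) t v (eS n i m) = 0 := by rw [h]; rfl
  rw [lineLM_apply, lA_at, lS_at_eA, mul_zero, add_zero] at h1
  rw [lineLM_apply, lA_at_eS, lS_at, mul_zero, zero_add] at h2
  have : v m = 0 := by
    have := congrArg₂ (· + ·) h1 h2
    simp only [add_zero] at this
    calc v m = ((1 - (t:ℂ)) * v m) + (t:ℂ) * v m := by ring
    _ = 0 := this
  exact hm this

lemma injL (t : ℝ) : Function.Injective (lineLM LinearMap.id lA t) := inj_of_ker (kerL t)

lemma injM {n : ℕ} (i : Fin n) (t : ℝ) : Function.Injective (lineLM lA (lS n i) t) :=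
  inj_of_ker (kerM i t)

lemma injA : Function.Injective ⇑lA := Finsupp.mapDomain_injective eA_strictMono.injective

lemma injS {n : ℕ} (i : Fin n) : Function.Injective ⇑(lS n i) :=
  Finsupp.mapDomain_injective (eS_strictMono n i).injective

lemma distinctS {n : ℕ} {i j : Fin n} (hij : i ≠ j) {v w : ℕ →₀ ℂ} (hv : v ≠ 0)
    (a : ℂ) : a • lS n j w ≠ lS n i v := by
  intro heq
  obtain ⟨m, hm, -⟩ := maxsupp v hv
  have h1 := congrArg (fun u : ℕ →₀ ℂ => u (eS n i m)) heq
  simp only [Finsupp.smul_apply, smul_eq_mul] at h1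
  rw [lS_at_eS hij, lS_at, mul_zero] at h1
  exact hm h1.symm

lemma distinctM {n : ℕ} {i j : Fin n} (hij : i ≠ j) (t : ℝ) {v w : ℕ →₀ ℂ} (hv : v ≠ 0)
    (hvw : ∀ c : ℂ, c • w ≠ v) (a : ℂ) :
    a • lineLM lA (lS n j) t w ≠ lineLM lA (lS n i) t v := by
  intro heq
  have key : ∀ k, (t : ℂ) * v k = 0 := by
    intro k
    have h1 := congrArg (fun u : ℕ →₀ ℂ => u (eS n i k)) heq
    simp only [Finsupp.smul_apply, smul_eq_mul] at h1
    rw [lineLM_apply, lineLM_apply, lA_at_eS, lA_at_eS, lS_at_eS hij, lS_at] at h1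
    simpa using h1.symm
  by_cases ht : (t : ℂ) = 0
  · have ht' : t = 0 := by exact_mod_cast ht
    rw [ht', lineLM_zero, lineLM_zero] at heq
    have : lA (a • w) = lA v := by rw [map_smul]; exact heq
    exact hvw a (injA this)
  · refine hv (Finsupp.ext fun k => ?_)
    have := (mul_eq_zero.mp (key k)).resolve_left ht
    simpa using this

/-! ### Good map instances for the linear maps -/

lemma goodA : GoodMap ⇑lA := goodMap_mapDomain eA_strictMono

lemma goodS {n : ℕ} (i : Fin n) : GoodMap ⇑(lS n i) := goodMap_mapDomain (eS_strictMono n i)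

lemma goodId : GoodMap ⇑(LinearMap.id : (ℕ →₀ ℂ) →ₗ[ℂ] (ℕ →₀ ℂ)) := goodMap_id

/-! ### Continuity of the induced families on projective space -/

lemma continuous_pmapFam {n : ℕ} (f g : Fin n → ((ℕ →₀ ℂ) →ₗ[ℂ] (ℕ →₀ ℂ)))
    (hGf : ∀ i, GoodMap ⇑(f i)) (hGg : ∀ i, GoodMap ⇑(g i))
    (hker : ∀ (i : Fin n) (t : ℝ), Function.Injective (lineLM (f i) (g i) t)) :
    Continuous fun p : ℝ × (Fin n → CPinf) =>
      fun i => Projectivization.map (lineLM (f i) (g i) p.1) (hker i p.1) (p.2 i) := by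
  have hQ : IsOpenQuotientMap (Pi.map fun _ : Fin n => pr) :=
    IsOpenQuotientMap.piMap fun _ => ⟨surjective_pr, continuous_pr, isOpenMap_pr⟩
  have hPQ := (IsOpenQuotientMap.id (X := ℝ)).prodMap hQ
  rw [hPQ.isQuotientMap.continuous_iff]
  have hcont : Continuous fun q : ℝ × (Fin n → {v : ℕ →₀ ℂ // v ≠ 0}) =>
      fun i => pr ⟨lineLM (f i) (g i) q.1 (q.2 i).1,
        ne_zero_of_inj (hker i q.1) (q.2 i).2⟩ := by
    refine continuous_pi fun i => continuous_pr.comp (Continuous.subtype_mk ?_ _)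
    have hc : Continuous fun q : ℝ × (Fin n → {v : ℕ →₀ ℂ // v ≠ 0}) =>
        lineMap (⇑(f i)) (⇑(g i)) (q.1, (q.2 i).1) :=
      (continuous_lineMap (hGf i) (hGg i)).comp
        (continuous_fst.prodMk (continuous_subtype_val.comp
          ((continuous_apply i).comp continuous_snd)))
    exact hc.congr fun q => (lineLM_fun_apply _ _ _ _).symm
  refine hcont.congr fun q => ?_
  funext i
  exact (Projectivization.map_mk (lineLM (f i) (g i) q.1) (hker i q.1) (q.2 i).1 (q.2 i).2).symm


lemma pmap_congr {f g : (ℕ →₀ ℂ) →ₗ[ℂ] (ℕ →₀ ℂ)} (h : f = g) (hf : Function.Injective f)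
    (hg : Function.Injective g) (x : CPinf) :
    Projectivization.map f hf x = Projectivization.map g hg x := by subst h; rfl

lemma pv_map_inj {F : (ℕ →₀ ℂ) →ₗ[ℂ] (ℕ →₀ ℂ)} (hF : Function.Injective F) :
    Function.Injective (Projectivization.map F hF) := by
  intro x y heq
  rw [← x.mk_rep, ← y.mk_rep] at heq ⊢
  rw [Projectivization.map_mk, Projectivization.map_mk,
    Projectivization.mk_eq_mk_iff'] at heq
  obtain ⟨a, ha⟩ := heq
  rw [Projectivization.mk_eq_mk_iff']
  exact ⟨a, hF (by rw [map_smul]; exact ha)⟩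

lemma pv_distinctS {n : ℕ} {i j : Fin n} (hij : i ≠ j) (x y : CPinf) :
    Projectivization.map (lS n i) (injS i) x ≠ Projectivization.map (lS n j) (injS j) y := by
  intro heq
  rw [← x.mk_rep, ← y.mk_rep, Projectivization.map_mk, Projectivization.map_mk,
    Projectivization.mk_eq_mk_iff'] at heq
  obtain ⟨a, ha⟩ := heq
  exact distinctS hij x.rep_nonzero a ha

lemma pv_distinctM {n : ℕ} {i j : Fin n} (hij : i ≠ j) (t : ℝ) {x y : CPinf} (hxy : x ≠ y) :
    Projectivization.map (lineLM lA (lS n i) t) (injM i t) x ≠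
      Projectivization.map (lineLM lA (lS n j) t) (injM j t) y := by
  intro heq
  rw [← x.mk_rep, ← y.mk_rep, Projectivization.map_mk, Projectivization.map_mk,
    Projectivization.mk_eq_mk_iff'] at heq
  obtain ⟨a, ha⟩ := heq
  have hvw : ∀ c : ℂ, c • y.rep ≠ x.rep := by
    intro c hc
    apply hxy
    rw [← x.mk_rep, ← y.mk_rep, Projectivization.mk_eq_mk_iff']
    exact ⟨c, hc⟩
  exact distinctM hij t x.rep_nonzero hvw a ha

lemma injTupleM {n : ℕ} (t : ℝ) (x : Fin n → CPinf) (hx : Function.Injective x) :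
    Function.Injective fun i =>
      Projectivization.map (lineLM lA (lS n i) t) (injM i t) (x i) := by
  intro i j heq
  by_contra hij
  exact pv_distinctM hij t (fun h => hij (hx h)) heq

lemma injTupleS {n : ℕ} (x : Fin n → CPinf) :
    Function.Injective fun i => Projectivization.map (lS n i) (injS i) (x i) := by
  intro i j heq
  by_contra hij
  exact pv_distinctS hij (x i) (x j) heq

/-! ### The continuous families -/

noncomputable def famL (n : ℕ) : C(ℝ × (Fin n → CPinf), Fin n → CPinf) :=
  ⟨fun p => fun i => Projectivization.map (lineLM LinearMap.id lA p.1) (injL p.1) (p.2 i),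
    continuous_pmapFam (fun _ => LinearMap.id) (fun _ => lA) (fun _ => goodId)
      (fun _ => goodA) (fun _ t => injL t)⟩

noncomputable def famM (n : ℕ) : C(ℝ × (Fin n → CPinf), Fin n → CPinf) :=
  ⟨fun p => fun i => Projectivization.map (lineLM lA (lS n i) p.1) (injM i p.1) (p.2 i),
    continuous_pmapFam (fun _ => lA) (fun i => lS n i) (fun _ => goodA)
      (fun i => goodS i) (fun i t => injM i t)⟩

/-! ### Continuous maps -/

/-- The configuration space. -/
abbrev Conf (n : ℕ) : Type := {f : Fin n → CPinf // Function.Injective f}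

noncomputable def cIncl (n : ℕ) : C(Conf n, Fin n → CPinf) :=
  ⟨fun f => f.1, continuous_subtype_val⟩

noncomputable def cA (n : ℕ) : C(Fin n → CPinf, Fin n → CPinf) :=
  ⟨fun x => fun i => Projectivization.map lA injA (x i),
    ((famL n).continuous.comp (continuous_const (y := (1:ℝ)).prodMk continuous_id)).congr
      fun x => funext fun i => pmap_congr (lineLM_one _ _) (injL 1) injA (x i)⟩

noncomputable def cS (n : ℕ) : C(Fin n → CPinf, Fin n → CPinf) :=
  ⟨fun x => fun i => Projectivization.map (lS n i) (injS i) (x i),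
    ((famM n).continuous.comp (continuous_const (y := (1:ℝ)).prodMk continuous_id)).congr
      fun x => funext fun i => pmap_congr (lineLM_one _ _) (injM i 1) (injS i) (x i)⟩

noncomputable def cg (n : ℕ) : C(Fin n → CPinf, Conf n) :=
  ⟨fun x => ⟨fun i => Projectivization.map (lS n i) (injS i) (x i), injTupleS x⟩,
    by exact (cS n).continuous.subtype_mk _⟩

noncomputable def cAX (n : ℕ) : C(Conf n, Conf n) :=
  ⟨fun x => ⟨fun i => Projectivization.map lA injA (x.1 i), (pv_map_inj injA).comp x.2⟩,
    by exact ((cA n).continuous.comp continuous_subtype_val).subtype_mk _⟩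

/-! ### Homotopies -/

noncomputable def hY1 (n : ℕ) :
    ContinuousMap.Homotopy (ContinuousMap.id (Fin n → CPinf)) (cA n) where
  toFun p := famL n ((p.1 : ℝ), p.2)
  continuous_toFun := (famL n).continuous.comp
    ((continuous_subtype_val.comp continuous_fst).prodMk continuous_snd)
  map_zero_left x := by
    funext i
    show Projectivization.map (lineLM LinearMap.id lA ((0 : unitInterval) : ℝ))
        (injL ((0 : unitInterval) : ℝ)) (x i) = x i
    rw [pmap_congr (show lineLM LinearMap.id lA ((0 : unitInterval) : ℝ) = LinearMap.id by
        rw [show ((0 : unitInterval) : ℝ) = 0 from rfl, lineLM_zero]) (injL _)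
      (LinearEquiv.refl ℂ (ℕ →₀ ℂ)).injective (x i), Projectivization.map_id]
    rfl
  map_one_left x := by
    funext i
    exact pmap_congr (by rw [show ((1 : unitInterval) : ℝ) = 1 from rfl, lineLM_one])
      (injL _) injA (x i)

noncomputable def hY2 (n : ℕ) : ContinuousMap.Homotopy (cA n) (cS n) where
  toFun p := famM n ((p.1 : ℝ), p.2)
  continuous_toFun := (famM n).continuous.comp
    ((continuous_subtype_val.comp continuous_fst).prodMk continuous_snd)
  map_zero_left x := by
    funext i
    exact pmap_congr (by rw [show ((0 : unitInterval) : ℝ) = 0 from rfl, lineLM_zero])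
      (injM i _) injA (x i)
  map_one_left x := by
    funext i
    exact pmap_congr (by rw [show ((1 : unitInterval) : ℝ) = 1 from rfl, lineLM_one])
      (injM i _) (injS i) (x i)

noncomputable def hX1 (n : ℕ) :
    ContinuousMap.Homotopy (ContinuousMap.id (Conf n)) (cAX n) where
  toFun p := ⟨fun i => Projectivization.map (lineLM LinearMap.id lA (p.1 : ℝ))
      (injL (p.1 : ℝ)) (p.2.1 i), (pv_map_inj (injL _)).comp p.2.2⟩
  continuous_toFun := Continuous.subtype_mk ((famL n).continuous.comp
    ((continuous_subtype_val.comp continuous_fst).prodMk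
      (continuous_subtype_val.comp continuous_snd))) _
  map_zero_left x := by
    refine Subtype.ext (funext fun i => ?_)
    show Projectivization.map (lineLM LinearMap.id lA ((0 : unitInterval) : ℝ))
        (injL ((0 : unitInterval) : ℝ)) (x.1 i) = x.1 i
    rw [pmap_congr (show lineLM LinearMap.id lA ((0 : unitInterval) : ℝ) = LinearMap.id by
        rw [show ((0 : unitInterval) : ℝ) = 0 from rfl, lineLM_zero]) (injL _)
      (LinearEquiv.refl ℂ (ℕ →₀ ℂ)).injective (x.1 i), Projectivization.map_id]
    rfl
  map_one_left x := by
    refine Subtype.ext (funext fun i => ?_)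
    exact pmap_congr (by rw [show ((1 : unitInterval) : ℝ) = 1 from rfl, lineLM_one])
      (injL _) injA (x.1 i)

noncomputable def hX2 (n : ℕ) :
    ContinuousMap.Homotopy (cAX n) ((cg n).comp (cIncl n)) where
  toFun p := ⟨fun i => Projectivization.map (lineLM lA (lS n i) (p.1 : ℝ))
      (injM i (p.1 : ℝ)) (p.2.1 i), injTupleM _ _ p.2.2⟩
  continuous_toFun := Continuous.subtype_mk ((famM n).continuous.comp
    ((continuous_subtype_val.comp continuous_fst).prodMk
      (continuous_subtype_val.comp continuous_snd))) _
  map_zero_left x := by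
    refine Subtype.ext (funext fun i => ?_)
    exact pmap_congr (by rw [show ((0 : unitInterval) : ℝ) = 0 from rfl, lineLM_zero])
      (injM i _) injA (x.1 i)
  map_one_left x := by
    refine Subtype.ext (funext fun i => ?_)
    exact pmap_congr (by rw [show ((1 : unitInterval) : ℝ) = 1 from rfl, lineLM_one])
      (injM i _) (injS i) (x.1 i)

end CfgCP

/-- For `n ≥ 1`, the inclusion of the ordered configuration space
`F(ℂP^∞, n)` (the subspace of `(ℂP^∞)ⁿ` of tuples with pairwise distinct coordinates)
into `(ℂP^∞)ⁿ` is a homotopy equivalence. -/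
theorem inclusion_config_homotopyEquiv (n : ℕ) (hn : 1 ≤ n) :
    ∃ h : ContinuousMap.HomotopyEquiv
        {f : Fin n → CPinf // Function.Injective f} (Fin n → CPinf),
      ∀ f : {f : Fin n → CPinf // Function.Injective f}, h.toFun f = f.val := by
  refine ⟨⟨CfgCP.cIncl n, CfgCP.cg n, ?_, ?_⟩, fun f => rfl⟩
  · exact ⟨((CfgCP.hX1 n).trans (CfgCP.hX2 n)).symm⟩
  · have hcomp : (CfgCP.cIncl n).comp (CfgCP.cg n) = CfgCP.cS n :=
      ContinuousMap.ext fun x => rfl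
    rw [hcomp]
    exact ⟨((CfgCP.hY1 n).trans (CfgCP.hY2 n)).symm⟩
end

section
/- The inclusion of the space F_nc(ℂP^∞, 3) of ordered triples of non-collinear points of ℂP^∞ into the product (ℂP^∞)^3 is a homotopy equivalence; in particular F_nc(ℂP^∞,3) is homotopy equivalent to (ℂP^∞)^3. -/
noncomputable section
namespace CPIproof


/-- The embedding `n ↦ 3n + j` of indices. -/
def dmap (j : Fin 3) : ℕ → ℕ := fun n => 3 * n + (j : ℕ)

lemma dmap_inj (j : Fin 3) : Function.Injective (dmap j) := by
  intro a b h; simp only [dmap] at h; omega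

/-- The "shift" linear operator induced by `dmap j`. -/
def S (j : Fin 3) (v : ℕ →₀ ℂ) : ℕ →₀ ℂ := Finsupp.mapDomain (dmap j) v

lemma S_apply_dmap (j : Fin 3) (v : ℕ →₀ ℂ) (n : ℕ) : S j v (dmap j n) = v n :=
  Finsupp.mapDomain_apply (dmap_inj j) v n

lemma S_apply_ne (j : Fin 3) (v : ℕ →₀ ℂ) (i : ℕ) (h : ∀ n, dmap j n ≠ i) : S j v i = 0 :=
  Finsupp.mapDomain_notin_range v i (by rintro ⟨n, rfl⟩; exact h n rfl)

lemma S_smul (j : Fin 3) (c : ℂ) (v : ℕ →₀ ℂ) : S j (c • v) = c • S j v :=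
  Finsupp.mapDomain_smul c v

lemma S_ne_zero (j : Fin 3) {v : ℕ →₀ ℂ} (hv : v ≠ 0) : S j v ≠ 0 := by
  intro h
  exact hv (Finsupp.mapDomain_injective (dmap_inj j) (by simpa [S] using h))

lemma sum_S_apply (c : Fin 3 → ℂ) (v : Fin 3 → (ℕ →₀ ℂ)) (j : Fin 3) (n : ℕ) :
    (∑ j', c j' • S j' (v j')) (dmap j n) = c j * v j n := by
  rw [Finset.sum_apply']
  rw [Finset.sum_eq_single j]
  · rw [Finsupp.smul_apply, S_apply_dmap, smul_eq_mul]
  · intro j' _ hne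
    rw [Finsupp.smul_apply, S_apply_ne, smul_zero]
    intro m hm
    have h1 : (j' : ℕ) < 3 := j'.isLt
    have h2 : (j : ℕ) < 3 := j.isLt
    simp only [dmap] at hm
    exact hne (Fin.ext (by omega))
  · simp

lemma keyA {v : ℕ →₀ ℂ} (hv : v ≠ 0) (j : Fin 3) {a b : ℂ} (hab : a + b = 1) :
    a • v + b • S j v ≠ 0 := by
  intro h
  have hsupp : v.support.Nonempty := Finsupp.support_nonempty_iff.mpr hv
  set n := v.support.max' hsupp with hn
  have hvn : v n ≠ 0 := Finsupp.mem_support_iff.mp (v.support.max'_mem hsupp)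
  by_cases hcase : n = 0 ∧ (j : ℕ) = 0
  · obtain ⟨hn0, hj0⟩ := hcase
    have hvs : ∀ i, i ≠ 0 → v i = 0 := by
      intro i hi
      by_contra hvi
      have := v.support.le_max' i (Finsupp.mem_support_iff.mpr hvi)
      omega
    have hSv : S j v = v := by
      ext i
      by_cases hi : i = 0
      · subst hi
        have h0 : dmap j 0 = 0 := by simp [dmap, hj0]
        calc S j v 0 = S j v (dmap j 0) := by rw [h0]
          _ = v 0 := S_apply_dmap _ _ _
      · by_cases hr : ∃ m, dmap j m = i
        · obtain ⟨m, rfl⟩ := hr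
          have hm0 : m ≠ 0 := by
            intro hmm; subst hmm; simp [dmap, hj0] at hi
          rw [S_apply_dmap, hvs m hm0, hvs _ hi]
        · rw [S_apply_ne _ _ _ (not_exists.mp hr), hvs i hi]
    rw [hSv, ← add_smul, hab, one_smul] at h
    exact hv h
  · have hj3 : (j : ℕ) < 3 := j.isLt
    have hgt : n < dmap j n := by
      simp only [dmap]
      omega
    have hv3 : v (dmap j n) = 0 := by
      by_contra hvv
      have := v.support.le_max' _ (Finsupp.mem_support_iff.mpr hvv)
      omega
    have hh := congrArg (fun w : ℕ →₀ ℂ => w (dmap j n)) h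
    simp only [Finsupp.add_apply, Finsupp.smul_apply, S_apply_dmap, hv3, smul_eq_mul, mul_zero,
      zero_add, Finsupp.coe_zero, Pi.zero_apply] at hh
    have hb : b = 0 := by
      rcases mul_eq_zero.mp hh with h' | h'
      · exact h'
      · exact absurd h' hvn
    have ha : a = 1 := by rw [hb, add_zero] at hab; exact hab
    rw [hb, ha, one_smul, zero_smul, add_zero] at h
    exact hv h

lemma keyC {v : Fin 3 → (ℕ →₀ ℂ)} (hv : ∀ j, v j ≠ 0) :
    LinearIndependent ℂ fun j => S j (v j) := by
  rw [Fintype.linearIndependent_iff]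
  intro c hc j
  have hsupp : (v j).support.Nonempty := Finsupp.support_nonempty_iff.mpr (hv j)
  set n := (v j).support.max' hsupp with hn
  have hvn : v j n ≠ 0 := Finsupp.mem_support_iff.mp ((v j).support.max'_mem hsupp)
  have hh := congrArg (fun w : ℕ →₀ ℂ => w (dmap j n)) hc
  simp only [Finsupp.coe_zero, Pi.zero_apply] at hh
  rw [sum_S_apply c v j n] at hh
  rcases mul_eq_zero.mp hh with h' | h'
  · exact h'
  · exact absurd h' hvn

lemma keyB {v : Fin 3 → (ℕ →₀ ℂ)} (hv : LinearIndependent ℂ v) {a b : ℂ} (hab : a + b = 1) :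
    LinearIndependent ℂ fun j => a • v j + b • S j (v j) := by
  have hvne : ∀ j, v j ≠ 0 := fun j => hv.ne_zero j
  rw [Fintype.linearIndependent_iff]
  intro c hc
  by_contra hcon
  push_neg at hcon
  obtain ⟨j0, hj0⟩ := hcon
  set u : ℕ →₀ ℂ := ∑ j, c j • v j with hu_def
  set z : ℕ →₀ ℂ := ∑ j, c j • S j (v j) with hz_def
  have hsum : a • u + b • z = 0 := by
    rw [hu_def, hz_def, Finset.smul_sum, Finset.smul_sum, ← Finset.sum_add_distrib, ← hc]
    exact Finset.sum_congr rfl fun j _ => by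
      rw [smul_add, smul_comm a (c j), smul_comm b (c j)]
  have hu : u ≠ 0 := fun h => hj0 (Fintype.linearIndependent_iff.mp hv c h j0)
  have hzval : ∀ (j : Fin 3) (n : ℕ), z (dmap j n) = c j * v j n := fun j n => sum_S_apply c v j n
  have hz : z ≠ 0 := by
    intro h
    have hs0 : (v j0).support.Nonempty := Finsupp.support_nonempty_iff.mpr (hvne j0)
    set n0 := (v j0).support.max' hs0 with hn0
    have hvn0 : v j0 n0 ≠ 0 := Finsupp.mem_support_iff.mp ((v j0).support.max'_mem hs0)
    have := hzval j0 n0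
    rw [h] at this
    simp only [Finsupp.coe_zero, Pi.zero_apply] at this
    exact mul_ne_zero hj0 hvn0 this.symm
  have hbne : b ≠ 0 := by
    rintro rfl
    rw [add_zero] at hab
    rw [hab, zero_smul, add_zero, one_smul] at hsum
    exact hu hsum
  have hane : a ≠ 0 := by
    rintro rfl
    rw [zero_add] at hab
    rw [hab, zero_smul, zero_add, one_smul] at hsum
    exact hz hsum
  have hzu : z = (-(a / b)) • u := by
    have h2 : b • z = -(a • u) := eq_neg_of_add_eq_zero_right hsum
    calc z = b⁻¹ • (b • z) := by rw [smul_smul, inv_mul_cancel₀ hbne, one_smul]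
      _ = b⁻¹ • (-(a • u)) := by rw [h2]
      _ = (-(a / b)) • u := by
          rw [smul_neg, smul_smul, ← neg_smul, div_eq_mul_inv, mul_comm]
  have hab0 : (-(a / b)) ≠ 0 := neg_ne_zero.mpr (div_ne_zero hane hbne)
  have hsuppz : z.support = u.support := by rw [hzu]; exact Finsupp.support_smul_eq hab0
  have hzsupp_ne : z.support.Nonempty := Finsupp.support_nonempty_iff.mpr hz
  set m := z.support.max' hzsupp_ne with hm
  have hmu : u m ≠ 0 := Finsupp.mem_support_iff.mp (hsuppz ▸ z.support.max'_mem hzsupp_ne)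
  have hum : u m = ∑ j, c j * v j m := by
    rw [hu_def, Finset.sum_apply']
    exact Finset.sum_congr rfl fun j _ => by rw [Finsupp.smul_apply, smul_eq_mul]
  obtain ⟨j', hj'⟩ : ∃ j', c j' * v j' m ≠ 0 := by
    by_contra hco
    push_neg at hco
    exact hmu (by rw [hum]; exact Finset.sum_eq_zero fun j _ => hco j)
  have hd1 : dmap j' m ∈ z.support := Finsupp.mem_support_iff.mpr (by rw [hzval]; exact hj')
  have hd2 : dmap j' m ≤ m := z.support.le_max' _ hd1
  have hm0 : m = 0 := by have := j'.isLt; simp only [dmap] at hd2; omega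
  have hgen : ∀ j, c j ≠ 0 → (j : ℕ) = 0 ∧ ∀ i, i ≠ 0 → v j i = 0 := by
    intro j hcj
    have hs : (v j).support.Nonempty := Finsupp.support_nonempty_iff.mpr (hvne j)
    set nj := (v j).support.max' hs with hnj
    have hvnj : v j nj ≠ 0 := Finsupp.mem_support_iff.mp ((v j).support.max'_mem hs)
    have hmem : dmap j nj ∈ z.support :=
      Finsupp.mem_support_iff.mpr (by rw [hzval]; exact mul_ne_zero hcj hvnj)
    have hle := z.support.le_max' _ hmem
    rw [← hm] at hle
    have hj3 : (j : ℕ) < 3 := j.isLt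
    simp only [dmap] at hle
    refine ⟨by omega, fun i hi => ?_⟩
    by_contra hvi
    have := (v j).support.le_max' i (Finsupp.mem_support_iff.mpr hvi)
    omega
  have hj00 : j0 = 0 := Fin.ext (hgen j0 hj0).1
  have hc12 : ∀ j : Fin 3, j ≠ 0 → c j = 0 := by
    intro j hj
    by_contra hcj
    exact hj (Fin.ext (hgen j hcj).1)
  have hc0 : c 0 ≠ 0 := hj00 ▸ hj0
  have hv0 : ∀ i, i ≠ 0 → v 0 i = 0 := (hgen 0 hc0).2
  have hS0 : S 0 (v 0) = v 0 := by
    ext i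
    by_cases hi : i = 0
    · subst hi
      have h00 : dmap (0 : Fin 3) 0 = 0 := by simp [dmap]
      calc S (0 : Fin 3) (v 0) 0 = S (0 : Fin 3) (v 0) (dmap 0 0) := by rw [h00]
        _ = v 0 0 := S_apply_dmap _ _ _
    · by_cases hr : ∃ mm, dmap (0 : Fin 3) mm = i
      · obtain ⟨mm, rfl⟩ := hr
        have hmm : mm ≠ 0 := by
          intro hmm; subst hmm; simp [dmap] at hi
        rw [S_apply_dmap, hv0 mm hmm, hv0 _ hi]
      · rw [S_apply_ne _ _ _ (not_exists.mp hr), hv0 i hi]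
  have huz : u = z := by
    rw [hu_def, hz_def, Fin.sum_univ_three, Fin.sum_univ_three,
      hc12 1 (by decide), hc12 2 (by decide), hS0]
    simp
  rw [huz, ← add_smul, hab, one_smul] at hsum
  exact hz hsum



open TopologicalSpace Topology

/-- The `k`-th finite-dimensional piece (as a raw type, no instances). -/
def Vfin (k : ℕ) := {v : ℕ →₀ ℂ // ∀ i, k ≤ i → v i = 0}

/-- Its topology, induced from the product topology. -/
def VfinTop (k : ℕ) : TopologicalSpace (Vfin k) :=
  TopologicalSpace.induced
    (fun v : Vfin k => fun i => (v.1 : ℕ →₀ ℂ) i) Pi.topologicalSpace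

lemma continuous_Vfin_val (k : ℕ) :
    Continuous[VfinTop k, _] (fun v : Vfin k => v.1) := by
  letI := VfinTop k
  exact continuous_iSup_rng (i := k) continuous_coinduced_rng

lemma continuous_finsupp_dom {X : Type*} [TopologicalSpace X] {f : (ℕ →₀ ℂ) → X}
    (h : ∀ k, Continuous[VfinTop k, _] fun v : Vfin k => f v.1) : Continuous f := by
  apply continuous_iSup_dom.mpr
  intro k
  apply continuous_coinduced_dom.mpr
  exact h k

/-- The coordinate functions on `Vfin k` are continuous. -/
lemma continuous_coord (k n : ℕ) : Continuous[VfinTop k, _] fun v : Vfin k => v.1 n := by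
  letI := VfinTop k
  exact (continuous_apply n).comp continuous_induced_dom

/-- The canonical surjection from the sigma type of the finite pieces. -/
def σmap : (Σ k, Vfin k) → (ℕ →₀ ℂ) := fun x => x.2.1

lemma σmap_surj : Function.Surjective σmap := by
  intro v
  refine ⟨⟨v.support.sup id + 1, v, fun i hi => ?_⟩, rfl⟩
  by_contra hvi
  have := Finset.le_sup (f := id) (Finsupp.mem_support_iff.mpr hvi)
  simp only [id] at this
  omega

lemma continuous_finsupp_prod_dom {X : Type*} [TopologicalSpace X]
    {f : (ℕ →₀ ℂ) × unitInterval → X}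
    (h : ∀ k, Continuous[@instTopologicalSpaceProd _ _ (VfinTop k) _, _]
      fun p : Vfin k × unitInterval => f (p.1.1, p.2)) : Continuous f := by
  letI : ∀ k, TopologicalSpace (Vfin k) := VfinTop
  have hq : IsQuotientMap σmap := by
    refine ⟨isCoinducing_iff.mpr fun s => ?_, σmap_surj⟩
    rw [iff_comm, isOpen_sigma_iff]
    have h1 : IsOpen s ↔ ∀ k, IsOpen[VfinTop k] ((fun v : Vfin k => v.1) ⁻¹' s) := by
      apply Iff.trans isOpen_iSup_iff
      exact forall_congr' fun k => isOpen_coinduced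
    exact h1
  apply hq.continuous_lift_prod_left
  have hcomp : Continuous fun q : Σ k, (Vfin k × unitInterval) => f (q.2.1.1, q.2.2) :=
    continuous_sigma fun k => h k
  have h2 := hcomp.comp (Homeomorph.sigmaProdDistrib (X := Vfin) (Y := unitInterval)).continuous
  refine h2.congr ?_
  rintro ⟨⟨k, v⟩, t⟩
  rfl
open TopologicalSpace Topology

/-- The linear homotopy at vector level: `t • v + (1 - t) • S j v`. -/
def W (j : Fin 3) (t : unitInterval) (v : ℕ →₀ ℂ) : ℕ →₀ ℂ :=
  (((t : ℝ) : ℂ)) • v + ((1 : ℂ) - ((t : ℝ) : ℂ)) • S j v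

lemma W_ne_zero (j : Fin 3) (t : unitInterval) {v : ℕ →₀ ℂ} (hv : v ≠ 0) :
    W j t v ≠ 0 := keyA hv j (by ring)

lemma W_one (j : Fin 3) (v : ℕ →₀ ℂ) : W j 1 v = v := by
  simp [W]

lemma W_zero (j : Fin 3) (v : ℕ →₀ ℂ) : W j 0 v = S j v := by
  simp [W]

lemma W_smul (j : Fin 3) (t : unitInterval) (c : ℂ) (v : ℕ →₀ ℂ) :
    W j t (c • v) = c • W j t v := by
  simp only [W, S_smul, smul_add, smul_comm c]

lemma continuous_W (j : Fin 3) :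
    Continuous fun p : (ℕ →₀ ℂ) × unitInterval => W j p.2 p.1 := by
  apply continuous_finsupp_prod_dom
  intro k
  letI : ∀ k, TopologicalSpace (Vfin k) := VfinTop
  show Continuous fun p : Vfin k × unitInterval => W j p.2 p.1.1
  have hmem : ∀ p : Vfin k × unitInterval, ∀ i, 3 * k + 3 ≤ i → W j p.2 p.1.1 i = 0 := by
    intro p i hik
    have hv0 : p.1.1 i = 0 := p.1.2 i (by omega)
    have hS0 : S j (p.1.1 : ℕ →₀ ℂ) i = 0 := by
      by_cases hr : ∃ n, dmap j n = i
      · obtain ⟨n, rfl⟩ := hr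
        have hj3 : (j : ℕ) < 3 := j.isLt
        have hn : k ≤ n := by simp only [dmap] at hik; omega
        rw [S_apply_dmap]
        exact p.1.2 n hn
      · exact S_apply_ne j _ i (not_exists.mp hr)
    simp [W, Finsupp.add_apply, Finsupp.smul_apply, hv0, hS0]
  have hfac : (fun p : Vfin k × unitInterval => W j p.2 p.1.1)
      = (fun w : Vfin (3 * k + 3) => w.1)
        ∘ (fun p : Vfin k × unitInterval =>
            (⟨W j p.2 p.1.1, hmem p⟩ : Vfin (3 * k + 3))) := rfl
  rw [hfac]
  refine Continuous.comp (continuous_Vfin_val (3 * k + 3)) ?_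
  apply continuous_induced_rng.mpr
  apply continuous_pi
  intro i
  show Continuous fun p : Vfin k × unitInterval => W j p.2 p.1.1 i
  have hco : Continuous fun p : Vfin k × unitInterval => ((p.2 : ℝ) : ℂ) :=
    Complex.continuous_ofReal.comp (continuous_subtype_val.comp continuous_snd)
  have hvi : ∀ n, Continuous fun p : Vfin k × unitInterval => p.1.1 n :=
    fun n => (continuous_coord k n).comp continuous_fst
  by_cases hr : ∃ n, dmap j n = i
  · obtain ⟨n, rfl⟩ := hr
    have hexp : ∀ p : Vfin k × unitInterval, W j p.2 p.1.1 (dmap j n)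
        = ((p.2 : ℝ) : ℂ) * p.1.1 (dmap j n) + (1 - ((p.2 : ℝ) : ℂ)) * p.1.1 n := by
      intro p
      simp only [W, Finsupp.add_apply, Finsupp.smul_apply, smul_eq_mul, S_apply_dmap]
    simp only [hexp]
    exact (hco.mul (hvi _)).add ((continuous_const.sub hco).mul (hvi n))
  · have hexp : ∀ p : Vfin k × unitInterval, W j p.2 p.1.1 i
        = ((p.2 : ℝ) : ℂ) * p.1.1 i := by
      intro p
      simp only [W, Finsupp.add_apply, Finsupp.smul_apply, smul_eq_mul,
        S_apply_ne j _ i (not_exists.mp hr), mul_zero, add_zero]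
    simp only [hexp]
    exact hco.mul (hvi i)

/-- The homotopy at the level of nonzero vectors. -/
def Gfun (j : Fin 3) : {v : ℕ →₀ ℂ // v ≠ 0} × unitInterval → CPinf :=
  fun p => Projectivization.mk ℂ (W j p.2 p.1.1) (W_ne_zero j p.2 p.1.2)

set_option maxHeartbeats 800000 in
lemma continuous_Gfun (j : Fin 3) : Continuous (Gfun j) := by
  have h1 : Continuous fun p : {v : ℕ →₀ ℂ // v ≠ 0} × unitInterval =>
      (⟨W j p.2 p.1.1, W_ne_zero j p.2 p.1.2⟩ : {v : ℕ →₀ ℂ // v ≠ 0}) := by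
    exact Continuous.subtype_mk ((continuous_W j).comp
      ((continuous_subtype_val.comp continuous_fst).prodMk continuous_snd)) _
  exact continuous_quotient_mk'.comp h1

/-- The projective straight-line homotopy from `S j` (at `t = 0`) to `id` (at `t = 1`). -/
def phi (j : Fin 3) : CPinf → C(unitInterval, CPinf) :=
  Projectivization.lift
    (fun v : {v : ℕ →₀ ℂ // v ≠ 0} =>
      (ContinuousMap.curry ⟨Gfun j, continuous_Gfun j⟩) v)
    (by
      intro a b c hab
      ext t
      simp only [ContinuousMap.curry_apply]
      have hc : c ≠ 0 := by
        rintro rfl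
        exact a.2 (by rw [hab, zero_smul])
      apply (Projectivization.mk_eq_mk_iff' ℂ _ _ _ _).mpr
      refine ⟨c, ?_⟩
      rw [← W_smul]
      congr 1
      exact hab.symm)

lemma continuous_phi (j : Fin 3) : Continuous (phi j) := by
  apply Continuous.quotient_lift
  exact (ContinuousMap.curry ⟨Gfun j, continuous_Gfun j⟩).continuous

lemma phi_mk (j : Fin 3) (v : ℕ →₀ ℂ) (hv : v ≠ 0) (t : unitInterval) :
    phi j (Projectivization.mk ℂ v hv) t = Projectivization.mk ℂ (W j t v) (W_ne_zero j t hv) :=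
  rfl

lemma phi_one (j : Fin 3) (x : CPinf) : phi j x 1 = x := by
  induction x using Projectivization.ind with
  | h v hv =>
    rw [phi_mk]
    exact (Projectivization.mk_eq_mk_iff' ℂ _ _ _ _).mpr ⟨1, by rw [one_smul, W_one]⟩

lemma indep_phi (t : unitInterval) {p : Fin 3 → CPinf}
    (hp : Projectivization.Independent p) :
    Projectivization.Independent fun j => phi j (p j) t := by
  have hrep : LinearIndependent ℂ fun j => (p j).rep :=
    Projectivization.independent_iff.mp hp
  have hli : LinearIndependent ℂ fun j : Fin 3 => W j t ((p j).rep) :=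
    keyB hrep (a := ((t : ℝ) : ℂ)) (b := 1 - ((t : ℝ) : ℂ)) (by ring)
  have h0 : ∀ j : Fin 3, W j t ((p j).rep) ≠ 0 :=
    fun j => W_ne_zero _ _ (p j).rep_nonzero
  have hmk := Projectivization.Independent.mk _ h0 hli
  have heq : (fun j => phi j (p j) t)
      = fun j : Fin 3 => Projectivization.mk ℂ (W j t ((p j).rep)) (h0 j) := by
    funext j
    conv_lhs => rw [← Projectivization.mk_rep (p j)]
    rw [phi_mk]
  rw [heq]
  exact hmk

lemma indep_phi_zero (p : Fin 3 → CPinf) :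
    Projectivization.Independent fun j => phi j (p j) 0 := by
  have h0 : ∀ j : Fin 3, S j ((p j).rep) ≠ 0 := fun j => S_ne_zero j (p j).rep_nonzero
  have hli : LinearIndependent ℂ fun j : Fin 3 => S j ((p j).rep) :=
    keyC fun j => (p j).rep_nonzero
  have hmk := Projectivization.Independent.mk _ h0 hli
  have heq : (fun j => phi j (p j) 0)
      = fun j : Fin 3 => Projectivization.mk ℂ (S j ((p j).rep)) (h0 j) := by
    funext j
    conv_lhs => rw [← Projectivization.mk_rep (p j)]
    rw [phi_mk]
    exact (Projectivization.mk_eq_mk_iff' ℂ _ _ _ _).mpr ⟨1, by rw [one_smul, W_zero]⟩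
  rw [heq]
  exact hmk

end CPIproof
end

open CPIproof in
/-- The inclusion of the space `F_nc(ℂP^∞, 3)` of ordered triples of
non-collinear points of `ℂP^∞` (triples whose representative vectors are linearly
independent) into `(ℂP^∞)³` is a homotopy equivalence. -/
theorem inclusion_noncollinear_homotopyEquiv :
    ∃ h : ContinuousMap.HomotopyEquiv
        {p : Fin 3 → CPinf // Projectivization.Independent p} (Fin 3 → CPinf),
      ∀ p : {p : Fin 3 → CPinf // Projectivization.Independent p}, h.toFun p = p.val := by
  classical
  let fincl : C({p : Fin 3 → CPinf // Projectivization.Independent p}, Fin 3 → CPinf) :=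
    ⟨fun p => p.1, continuous_subtype_val⟩
  let gmap : C(Fin 3 → CPinf, {p : Fin 3 → CPinf // Projectivization.Independent p}) :=
    ⟨fun p => ⟨fun j => phi j (p j) 0, indep_phi_zero p⟩,
     Continuous.subtype_mk (continuous_pi fun j =>
       (ContinuousEvalConst.continuous_eval_const 0).comp
         ((continuous_phi j).comp (continuous_apply j))) _⟩
  let Hmap : C(unitInterval × (Fin 3 → CPinf), Fin 3 → CPinf) :=
    ⟨fun q => fun j => phi j (q.2 j) q.1,
     continuous_pi fun j => by
       have h1 : Continuous fun q : unitInterval × (Fin 3 → CPinf) =>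
           (phi j (q.2 j), q.1) :=
         ((continuous_phi j).comp ((continuous_apply j).comp continuous_snd)).prodMk
           continuous_fst
       exact ContinuousEval.continuous_eval.comp h1⟩
  let Htop : (fincl.comp gmap).Homotopy (ContinuousMap.id _) :=
    { toContinuousMap := Hmap
      map_zero_left := fun p => rfl
      map_one_left := fun p => funext fun j => phi_one j (p j) }
  let Hbmap : C(unitInterval × {p : Fin 3 → CPinf // Projectivization.Independent p},
      {p : Fin 3 → CPinf // Projectivization.Independent p}) :=
    ⟨fun q => ⟨fun j => phi j (q.2.1 j) q.1, indep_phi q.1 q.2.2⟩,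
     Continuous.subtype_mk (continuous_pi fun j => by
       have h1 : Continuous fun q :
           unitInterval × {p : Fin 3 → CPinf // Projectivization.Independent p} =>
           (phi j (q.2.1 j), q.1) :=
         ((continuous_phi j).comp ((continuous_apply j).comp
           (continuous_subtype_val.comp continuous_snd))).prodMk continuous_fst
       exact ContinuousEval.continuous_eval.comp h1) _⟩
  let Hbot : (gmap.comp fincl).Homotopy (ContinuousMap.id _) :=
    { toContinuousMap := Hbmap
      map_zero_left := fun p => Subtype.ext rfl
      map_one_left := fun p => Subtype.ext (funext fun j => phi_one j (p.1 j)) }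
  exact ⟨⟨fincl, gmap, ⟨Hbot⟩, ⟨Htop⟩⟩, fun p => rfl⟩
end

section
/- For all natural numbers m and k with m + 1 ≤ k and 2k ≤ 3m, one has, as integers, P₃,≤m(k) = ⌊(k+3)²/12⌉ − ⌊(k−m−1)²/4⌉ + m − k. -/
open Finset

/-- `P₃,≤m k` is the number of partitions of `k` into three non-negative parts,
each at most `m`. -/
noncomputable def P3le (m k : ℕ) : ℕ :=
  {p : ℕ × ℕ × ℕ | p.1 ≤ m ∧ p.2.2 ≤ p.2.1 ∧ p.2.1 ≤ p.1 ∧ p.1 + p.2.1 + p.2.2 = k}.ncard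

/-- Triples `a ≥ b ≥ c ≥ 0` with sum `k`. -/
def T3 (k : ℕ) : Finset (ℕ × ℕ × ℕ) :=
  ((range (k+1)) ×ˢ (range (k+1)) ×ˢ (range (k+1))).filter
    (fun p => p.2.2 ≤ p.2.1 ∧ p.2.1 ≤ p.1 ∧ p.1 + p.2.1 + p.2.2 = k)

lemma mem_T3 {k : ℕ} {p : ℕ × ℕ × ℕ} :
    p ∈ T3 k ↔ p.2.2 ≤ p.2.1 ∧ p.2.1 ≤ p.1 ∧ p.1 + p.2.1 + p.2.2 = k := by
  simp only [T3, mem_filter, mem_product, mem_range]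
  omega

/-- Pairs `b ≥ c ≥ 0` with sum at most `n`. -/
def T2 (n : ℕ) : Finset (ℕ × ℕ) :=
  ((range (n+1)) ×ˢ (range (n+1))).filter (fun p => p.2 ≤ p.1 ∧ p.1 + p.2 ≤ n)

lemma mem_T2 {n : ℕ} {p : ℕ × ℕ} :
    p ∈ T2 n ↔ p.2 ≤ p.1 ∧ p.1 + p.2 ≤ n := by
  simp only [T2, mem_filter, mem_product, mem_range]
  omega

lemma p3_rec (k : ℕ) : (T3 (k+3)).card = (T3 k).card + ((k+3)/2 + 1) := by
  have hsplit : ((T3 (k+3)).filter (fun p => p.2.2 = 0)).card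
      + ((T3 (k+3)).filter (fun p => ¬ p.2.2 = 0)).card = (T3 (k+3)).card :=
    Finset.card_filter_add_card_filter_not _
  have h0 : ((T3 (k+3)).filter (fun p => p.2.2 = 0)).card = (k+3)/2 + 1 := by
    rw [← Finset.card_range ((k+3)/2 + 1)]
    apply Finset.card_nbij' (i := fun p => p.2.1) (j := fun i => (k+3-i, i, 0))
    · intro p hp
      simp only [Finset.mem_coe, Finset.mem_filter, mem_T3] at hp
      simp only [Finset.mem_coe, Finset.mem_range]
      omega
    · intro i hi
      simp only [Finset.mem_coe, Finset.mem_range] at hi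
      simp only [Finset.mem_coe, Finset.mem_filter, mem_T3, and_true, true_and]
      omega
    · rintro ⟨a, b, c⟩ hp
      simp only [Finset.mem_coe, Finset.mem_filter, mem_T3] at hp
      simp only [Prod.mk.injEq, and_true, true_and]
      omega
    · intro i hi
      rfl
  have h1 : ((T3 (k+3)).filter (fun p => ¬ p.2.2 = 0)).card = (T3 k).card := by
    apply Finset.card_nbij' (i := fun p => (p.1 - 1, p.2.1 - 1, p.2.2 - 1))
      (j := fun q => (q.1 + 1, q.2.1 + 1, q.2.2 + 1))
    · intro p hp
      simp only [Finset.mem_coe, Finset.mem_filter, mem_T3] at hp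
      simp only [Finset.mem_coe, mem_T3, and_true, true_and]
      omega
    · intro q hq
      rw [Finset.mem_coe, mem_T3] at hq
      simp only [Finset.mem_coe, Finset.mem_filter, mem_T3, and_true, true_and]
      omega
    · rintro ⟨a, b, c⟩ hp
      simp only [Finset.mem_coe, Finset.mem_filter, mem_T3] at hp
      simp only [Prod.mk.injEq, and_true, true_and]
      omega
    · intro q hq
      rfl
  omega

lemma p3_rec6 (k : ℕ) : (T3 (k+6)).card = (T3 k).card + (k + 6) := by
  have h1 := p3_rec k
  have h2 := p3_rec (k+3)
  have h3 : k + 3 + 3 = k + 6 := by omega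
  rw [h3] at h2
  omega

lemma p3_closed (k : ℕ) : ((T3 k).card : ℤ) = round ((((k : ℚ) + 3) ^ 2) / 12) := by
  induction k using Nat.strong_induction_on with
  | _ k ih =>
    by_cases hk : k < 6
    · interval_cases k <;> norm_num [round_eq] <;> decide
    · obtain ⟨j, rfl⟩ : ∃ j, k = j + 6 := ⟨k - 6, by omega⟩
      have h1 := p3_rec6 j
      have h2 := ih j (by omega)
      have key : round (((((j:ℕ) + 6 : ℕ) : ℚ) + 3) ^ 2 / 12)
          = round (((j : ℚ) + 3) ^ 2 / 12) + ((j : ℤ) + 6) := by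
        have heq : ((((j:ℕ) + 6 : ℕ) : ℚ) + 3) ^ 2 / 12
            = ((j : ℚ) + 3) ^ 2 / 12 + (((j : ℤ) + 6 : ℤ) : ℚ) := by
          push_cast; ring
        rw [heq, round_add_intCast]
      rw [key]
      push_cast [h1]
      omega

lemma q_rec (n : ℕ) : (T2 (n+1)).card = (T2 n).card + ((n+1)/2 + 1) := by
  have hsplit : ((T2 (n+1)).filter (fun p => p.1 + p.2 ≤ n)).card
      + ((T2 (n+1)).filter (fun p => ¬ p.1 + p.2 ≤ n)).card = (T2 (n+1)).card :=
    Finset.card_filter_add_card_filter_not _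
  have h0 : ((T2 (n+1)).filter (fun p => p.1 + p.2 ≤ n)) = T2 n := by
    ext p
    simp only [Finset.mem_coe, Finset.mem_filter, mem_T2, and_true, true_and]
    omega
  have h1 : ((T2 (n+1)).filter (fun p => ¬ p.1 + p.2 ≤ n)).card = (n+1)/2 + 1 := by
    rw [← Finset.card_range ((n+1)/2 + 1)]
    apply Finset.card_nbij' (i := fun p => p.2) (j := fun i => (n+1-i, i))
    · intro p hp
      simp only [Finset.mem_coe, Finset.mem_filter, mem_T2] at hp
      simp only [Finset.mem_coe, Finset.mem_range]
      omega
    · intro i hi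
      simp only [Finset.mem_coe, Finset.mem_range] at hi
      simp only [Finset.mem_coe, Finset.mem_filter, mem_T2, and_true, true_and]
      omega
    · rintro ⟨a, b⟩ hp
      simp only [Finset.mem_coe, Finset.mem_filter, mem_T2] at hp
      simp only [Prod.mk.injEq, and_true, true_and]
      omega
    · intro i hi
      rfl
  rw [h0] at hsplit
  omega

lemma q_rec2 (n : ℕ) : (T2 (n+2)).card = (T2 n).card + (n + 3) := by
  have h1 := q_rec n
  have h2 := q_rec (n+1)
  have h3 : n + 1 + 1 = n + 2 := by omega
  rw [h3] at h2
  omega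

lemma q_closed (n : ℕ) : ((T2 n).card : ℤ) = round ((((n : ℚ) + 2) ^ 2) / 4) := by
  induction n using Nat.strong_induction_on with
  | _ n ih =>
    by_cases hn : n < 2
    · interval_cases n <;> norm_num [round_eq] <;> decide
    · obtain ⟨j, rfl⟩ : ∃ j, n = j + 2 := ⟨n - 2, by omega⟩
      have h1 := q_rec2 j
      have h2 := ih j (by omega)
      have key : round (((((j:ℕ) + 2 : ℕ) : ℚ) + 2) ^ 2 / 4)
          = round (((j : ℚ) + 2) ^ 2 / 4) + ((j : ℤ) + 3) := by
        have heq : ((((j:ℕ) + 2 : ℕ) : ℚ) + 2) ^ 2 / 4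
            = ((j : ℚ) + 2) ^ 2 / 4 + (((j : ℤ) + 3 : ℤ) : ℚ) := by
          push_cast; ring
        rw [heq, round_add_intCast]
      rw [key]
      push_cast [h1]
      omega

/-- For `m + 1 ≤ k ≤ ⌊3m/2⌋`,
`P₃,≤m(k) = ⌊(k+3)²/12⌉ − ⌊(k−m−1)²/4⌉ + m − k` (as integers). -/
theorem P3le_formula (m k : ℕ) (h1 : m + 1 ≤ k) (h2 : 2 * k ≤ 3 * m) :
    (P3le m k : ℤ) =
      round ((((k : ℚ) + 3) ^ 2) / 12) - round ((((k : ℚ) - m - 1) ^ 2) / 4)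
        + (m : ℤ) - (k : ℤ) := by
  set n : ℕ := k - m - 1 with hn
  -- P3le as a finset card
  have hset : P3le m k = ((T3 k).filter (fun p => p.1 ≤ m)).card := by
    rw [P3le, ← Set.ncard_coe_finset]
    congr 1
    ext p
    simp only [Set.mem_setOf_eq, Finset.coe_filter, mem_T3]
    tauto
  have hsplit : ((T3 k).filter (fun p => p.1 ≤ m)).card
      + ((T3 k).filter (fun p => ¬ p.1 ≤ m)).card = (T3 k).card :=
    Finset.card_filter_add_card_filter_not _
  have hbad : ((T3 k).filter (fun p => ¬ p.1 ≤ m)).card = (T2 n).card := by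
    apply Finset.card_nbij' (i := fun p => (p.2.1, p.2.2))
      (j := fun q => (k - q.1 - q.2, q.1, q.2))
    · intro p hp
      simp only [Finset.mem_coe, Finset.mem_filter, mem_T3] at hp
      simp only [Finset.mem_coe, mem_T2, and_true, true_and]
      omega
    · intro q hq
      rw [Finset.mem_coe, mem_T2] at hq
      simp only [Finset.mem_coe, Finset.mem_filter, mem_T3, and_true, true_and]
      omega
    · rintro ⟨a, b, c⟩ hp
      simp only [Finset.mem_coe, Finset.mem_filter, mem_T3] at hp
      simp only [Prod.mk.injEq, and_true, true_and]
      omega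
    · intro q hq
      rfl
  have hp3 := p3_closed k
  have hq := q_closed n
  -- relate the two round expressions
  have hnq : ((k : ℚ) - m - 1) = (n : ℚ) := by
    have hnz : (n : ℤ) = (k : ℤ) - m - 1 := by omega
    have := congrArg (fun z : ℤ => (z : ℚ)) hnz
    push_cast at this
    linarith
  have hround : round ((((n : ℚ)) + 2) ^ 2 / 4)
      = round ((((k : ℚ) - m - 1) ^ 2) / 4) + ((n : ℤ) + 1) := by
    rw [hnq]
    have heq : (((n : ℚ)) + 2) ^ 2 / 4
        = ((n : ℚ)) ^ 2 / 4 + (((n : ℤ) + 1 : ℤ) : ℚ) := by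
      push_cast; ring
    rw [heq, round_add_intCast]
  rw [hset]
  rw [hbad] at hsplit
  have hcast : (((T3 k).filter (fun p => p.1 ≤ m)).card : ℤ) + ((T2 n).card : ℤ)
      = ((T3 k).card : ℤ) := by exact_mod_cast hsplit
  omega
end
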